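/- Let {P_x : x = 1,...,d²} be a generalized SIM with efficiency η on a d-dimensional Hilbert space H_A (d ≥ 2), and let X̃ be any Hermitian operator on H_A ⊗ H_B. Then ∑_{x=1}^{d²} Tr_B[ (Tr_A[(P_x ⊗ I_B) X̃])² ] = l(η)·Tr_B[(Tr_A X̃)²] + r(η)·Tr[X̃²], where l(η) = (1 − dη)/(d² − 1) and r(η) = (d³η − 1)/(d(d² − 1)). -/

import Mathlib

open Matrix Kronecker BigOperators Complex
open scoped ComplexOrder

noncomputable section

/-- Partial trace over the `A` factor. -/
def ptraceA (dA dB : ℕ) (X : Matrix (Fin dA × Fin dB) (Fin dA × Fin dB) ℂ) :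
    Matrix (Fin dB) (Fin dB) ℂ :=
  fun b b' => ∑ a, X (a, b) (a, b')

theorem stmt8 (dA dB : ℕ) (hd : 2 ≤ dA) (η : ℝ)
    (hη1 : 1 / (dA : ℝ) ^ 3 < η) (hη2 : η ≤ 1 / (dA : ℝ) ^ 2)
    (P : Fin (dA ^ 2) → Matrix (Fin dA) (Fin dA) ℂ)
    (hPos : ∀ x, (P x).PosSemidef)
    (hPOVM : ∑ x, P x = 1)
    (hEff : ∀ x, (P x * P x).trace = (η : ℂ))
    (hSym : ∀ x y, x ≠ y → (P x * P y).trace =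
      (((1 - η * dA) / ((dA : ℝ) * ((dA : ℝ) ^ 2 - 1)) : ℝ) : ℂ))
    (X : Matrix (Fin dA × Fin dB) (Fin dA × Fin dB) ℂ) (hX : X.IsHermitian) :
    ∑ x : Fin (dA ^ 2),
        (ptraceA dA dB (((P x) ⊗ₖ (1 : Matrix (Fin dB) (Fin dB) ℂ)) * X) *
          ptraceA dA dB (((P x) ⊗ₖ (1 : Matrix (Fin dB) (Fin dB) ℂ)) * X)).trace =
      (((1 - (dA : ℝ) * η) / ((dA : ℝ) ^ 2 - 1) : ℝ) : ℂ) *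
          (ptraceA dA dB X * ptraceA dA dB X).trace
        + ((((dA : ℝ) ^ 3 * η - 1) / ((dA : ℝ) * ((dA : ℝ) ^ 2 - 1)) : ℝ) : ℂ) *
          (X * X).trace := by
  -- abbreviations
  have hd2 : (2:ℝ) ≤ (dA:ℝ) := by exact_mod_cast hd
  have hd0 : (0:ℝ) < (dA:ℝ) := by linarith
  have hden : (0:ℝ) < (dA:ℝ)^2 - 1 := by nlinarith
  have hdC : (dA : ℂ) ≠ 0 := by
    exact_mod_cast (Complex.ofReal_ne_zero.mpr (ne_of_gt hd0))
  have hdenC : ((dA:ℂ)^2 - 1) ≠ 0 := by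
    have : ((dA:ℂ)^2 - 1) = ((((dA:ℝ)^2 - 1) : ℝ) : ℂ) := by push_cast; ring
    rw [this]
    exact Complex.ofReal_ne_zero.mpr (ne_of_gt hden)
  set c : ℂ := (((1 - η * dA) / ((dA : ℝ) * ((dA : ℝ) ^ 2 - 1)) : ℝ) : ℂ) with hc_def
  set l : ℂ := (((1 - (dA : ℝ) * η) / ((dA : ℝ) ^ 2 - 1) : ℝ) : ℂ) with hl_def
  set r : ℂ := ((((dA : ℝ) ^ 3 * η - 1) / ((dA : ℝ) * ((dA : ℝ) ^ 2 - 1)) : ℝ) : ℂ) with hr_def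
  have hc : c = (1 - (η:ℂ) * dA) / ((dA:ℂ) * ((dA:ℂ)^2 - 1)) := by
    rw [hc_def]; push_cast; ring
  have hl : l = (1 - (dA:ℂ) * η) / ((dA:ℂ)^2 - 1) := by
    rw [hl_def]; push_cast; ring
  have hr : r = ((dA:ℂ)^3 * η - 1) / ((dA:ℂ) * ((dA:ℂ)^2 - 1)) := by
    rw [hr_def]; push_cast; ring
  have hrc : r = (η:ℂ) - c := by
    rw [hr, hc]; field_simp; ring
  have hlc : l = c * dA := by
    rw [hl, hc]; field_simp
  have hrne : r ≠ 0 := by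
    rw [hr_def]
    refine Complex.ofReal_ne_zero.mpr (ne_of_gt (div_pos ?_ (by positivity)))
    have h3 : (0:ℝ) < (dA:ℝ)^3 := by positivity
    have := (div_lt_iff₀ h3).mp hη1
    nlinarith
  -- card of index type
  have hone_le : 1 ≤ dA ^ 2 := Nat.one_le_pow _ _ (by omega)
  have hcastN : ((dA^2 - 1 : ℕ) : ℂ) = (dA:ℂ)^2 - 1 := by
    push_cast [Nat.cast_sub hone_le]; ring
  -- trace of each P y is 1/d
  have htr : ∀ y, (P y).trace = (dA:ℂ)⁻¹ := by
    intro y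
    have h1 : (P y).trace = ∑ x, (P y * P x).trace := by
      calc (P y).trace = (P y * 1).trace := by rw [mul_one]
        _ = (P y * ∑ x, P x).trace := by rw [hPOVM]
        _ = (∑ x, P y * P x).trace := by rw [Finset.mul_sum]
        _ = ∑ x, (P y * P x).trace := by rw [Matrix.trace_sum]
    rw [h1, ← Finset.add_sum_erase _ _ (Finset.mem_univ y), hEff y]
    rw [Finset.sum_congr rfl (fun x hx => hSym y x (Ne.symm (Finset.ne_of_mem_erase hx)))]
    rw [Finset.sum_const, Finset.card_erase_of_mem (Finset.mem_univ y), Finset.card_univ,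
      Fintype.card_fin, nsmul_eq_mul, hcastN]
    -- now: ↑η + ((dA:ℂ)^2 - 1) * c = (dA:ℂ)⁻¹
    rw [hc]
    field_simp
    ring
  -- linear independence of P
  have hLI : LinearIndependent ℂ P := by
    rw [Fintype.linearIndependent_iff]
    intro g hg
    have hy : ∀ y, ((η:ℂ) - c) * g y + c * (∑ i, g i) = 0 := by
      intro y
      have h0 : (P y * ∑ i, g i • P i).trace = 0 := by rw [hg, mul_zero, Matrix.trace_zero]
      have h1 : (P y * ∑ i, g i • P i).trace = ∑ i, g i * (P y * P i).trace := by
        rw [Finset.mul_sum, Matrix.trace_sum]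
        exact Finset.sum_congr rfl fun i _ => by rw [Matrix.mul_smul, Matrix.trace_smul, smul_eq_mul]
      have h2 : ∑ i, g i * (P y * P i).trace = ((η:ℂ) - c) * g y + c * (∑ i, g i) := by
        rw [← Finset.add_sum_erase _ _ (Finset.mem_univ y), hEff y]
        rw [Finset.sum_congr rfl (fun i hi => by
          rw [hSym y i (Ne.symm (Finset.ne_of_mem_erase hi))])]
        rw [← Finset.sum_mul, Finset.sum_erase_eq_sub (Finset.mem_univ y)]
        ring
      rw [← h2, ← h1, h0]
    have hS : (∑ i, g i) = 0 := by
      have hsum := Finset.sum_congr rfl (fun y (_ : y ∈ Finset.univ) => hy y)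
      rw [Finset.sum_const_zero] at hsum
      have : (((η:ℂ) - c) + (dA:ℂ)^2 * c) * (∑ i, g i) = 0 := by
        rw [← hsum, Finset.sum_add_distrib, ← Finset.mul_sum, Finset.sum_const,
          Finset.card_univ, Fintype.card_fin, nsmul_eq_mul]
        push_cast
        ring
      have hne : (((η:ℂ) - c) + (dA:ℂ)^2 * c) ≠ 0 := by
        have : ((η:ℂ) - c) + (dA:ℂ)^2 * c = (dA:ℂ)⁻¹ := by
          rw [hc]; field_simp; ring
        rw [this]
        exact inv_ne_zero hdC
      exact (mul_eq_zero.mp this).resolve_left hne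
    intro y
    have := hy y
    rw [hS, mul_zero, add_zero, ← hrc, mul_eq_zero] at this
    exact this.resolve_left hrne
  haveI : Nonempty (Fin (dA ^ 2)) := ⟨⟨0, by positivity⟩⟩
  have hcard : Fintype.card (Fin (dA ^ 2)) = Module.finrank ℂ (Matrix (Fin dA) (Fin dA) ℂ) := by
    rw [Fintype.card_fin, Module.finrank_matrix, Fintype.card_fin, Module.finrank_self]
    ring
  let b : Module.Basis (Fin (dA ^ 2)) ℂ (Matrix (Fin dA) (Fin dA) ℂ) :=
    basisOfLinearIndependentOfCardEqFinrank hLI hcard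
  have hb : ⇑b = P := coe_basisOfLinearIndependentOfCardEqFinrank hLI hcard
  -- the two superoperators
  let L : Matrix (Fin dA) (Fin dA) ℂ →ₗ[ℂ] Matrix (Fin dA) (Fin dA) ℂ :=
    { toFun := fun A => ∑ x, (P x * A).trace • P x
      map_add' := by
        intro A B
        simp [Matrix.mul_add, Matrix.trace_add, add_smul, Finset.sum_add_distrib]
      map_smul' := by
        intro s A
        simp [Matrix.mul_smul, Matrix.trace_smul, smul_smul, Finset.smul_sum] }
  let R : Matrix (Fin dA) (Fin dA) ℂ →ₗ[ℂ] Matrix (Fin dA) (Fin dA) ℂ :=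
    { toFun := fun A => r • A + (l * A.trace) • 1
      map_add' := by
        intro A B
        simp only [Matrix.trace_add, mul_add, add_smul, smul_add]
        abel
      map_smul' := by
        intro s A
        simp only [Matrix.trace_smul, smul_eq_mul, RingHom.id_apply, smul_add, smul_smul]
        rw [mul_comm r s, mul_left_comm l s] }
  have hLR : L = R := by
    apply b.ext
    intro y
    rw [hb]
    show ∑ x, (P x * P y).trace • P x = r • P y + (l * (P y).trace) • 1
    rw [← Finset.add_sum_erase _ _ (Finset.mem_univ y), hEff y]
    rw [Finset.sum_congr rfl (fun x hx => by
      rw [hSym x y (Finset.ne_of_mem_erase hx)])]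
    rw [← Finset.smul_sum, Finset.sum_erase_eq_sub (Finset.mem_univ y), hPOVM]
    rw [htr y, hrc, hlc]
    rw [smul_sub, sub_smul]
    have : c * (dA:ℂ) * (dA:ℂ)⁻¹ = c := by field_simp
    rw [this]
    abel
  -- the key scalar 2-design identity
  have key : ∀ a a' e e' : Fin dA, (∑ x, P x a a' * P x e e') =
      r * (if a' = e ∧ a = e' then (1:ℂ) else 0)
      + (l * if a' = a then (1:ℂ) else 0) * (if e = e' then (1:ℂ) else 0) := by
    intro a a' e e'
    have h := DFunLike.congr_fun hLR (Matrix.single a' a (1:ℂ))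
    have h2 := congrFun (congrFun h e) e'
    have htrE : ∀ x, (P x * Matrix.single a' a (1:ℂ)).trace = P x a a' := by
      intro x
      simp [Matrix.trace, Matrix.diag, Matrix.mul_apply, Matrix.single, ite_and,
        Finset.sum_ite_eq, Finset.sum_ite_eq']
    simp only [L, R, LinearMap.coe_mk, AddHom.coe_mk, Matrix.sum_apply, Matrix.smul_apply,
      Matrix.add_apply, Matrix.one_apply, smul_eq_mul, htrE] at h2
    have htrE2 : (Matrix.single a' a (1:ℂ)).trace = if a' = a then 1 else 0 := by
      by_cases hh : a' = a
      · subst hh; simp [Matrix.trace_single_eq_same]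
      · rw [Matrix.trace_single_eq_of_ne (h := hh), if_neg hh]
    rw [h2, htrE2]
    congr 2
  -- expansion of each summand of the LHS
  have expand1 : ∀ x : Fin (dA^2),
      (ptraceA dA dB ((P x ⊗ₖ (1 : Matrix (Fin dB) (Fin dB) ℂ)) * X) *
        ptraceA dA dB ((P x ⊗ₖ (1 : Matrix (Fin dB) (Fin dB) ℂ)) * X)).trace
      = ∑ bb : Fin dB, ∑ bb' : Fin dB, ∑ a : Fin dA, ∑ a₃ : Fin dA, ∑ a₂ : Fin dA, ∑ a₄ : Fin dA,
          (P x a a₂ * P x a₃ a₄) * (X (a₂,bb) (a,bb') * X (a₄,bb') (a₃,bb)) := by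
    intro x
    have hM : ∀ bb bb', ptraceA dA dB ((P x ⊗ₖ (1 : Matrix (Fin dB) (Fin dB) ℂ)) * X) bb bb'
        = ∑ a : Fin dA, ∑ a₂ : Fin dA, P x a a₂ * X (a₂,bb) (a,bb') := by
      intro bb bb'
      simp [ptraceA, Matrix.mul_apply, Fintype.sum_prod_type, Matrix.one_apply,
        Matrix.kroneckerMap_apply, mul_ite, ite_mul, mul_one, mul_zero, zero_mul,
        one_mul, Finset.sum_ite_eq, Finset.sum_ite_eq']
    calc (ptraceA dA dB ((P x ⊗ₖ (1 : Matrix (Fin dB) (Fin dB) ℂ)) * X) *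
        ptraceA dA dB ((P x ⊗ₖ (1 : Matrix (Fin dB) (Fin dB) ℂ)) * X)).trace
        = ∑ bb, ∑ bb', ptraceA dA dB ((P x ⊗ₖ (1 : Matrix (Fin dB) (Fin dB) ℂ)) * X) bb bb' *
            ptraceA dA dB ((P x ⊗ₖ (1 : Matrix (Fin dB) (Fin dB) ℂ)) * X) bb' bb := by
          simp [Matrix.trace, Matrix.diag, Matrix.mul_apply]
      _ = _ := by
          refine Finset.sum_congr rfl fun bb _ => Finset.sum_congr rfl fun bb' _ => ?_
          rw [hM, hM, Finset.sum_mul_sum]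
          refine Finset.sum_congr rfl fun a _ => Finset.sum_congr rfl fun a₃ _ => ?_
          rw [Finset.sum_mul_sum]
          refine Finset.sum_congr rfl fun a₂ _ => Finset.sum_congr rfl fun a₄ _ => ?_
          ring
  rw [Finset.sum_congr rfl (fun x _ => expand1 x)]
  -- move the x-sum innermost
  have hswap : (∑ x : Fin (dA^2), ∑ bb : Fin dB, ∑ bb' : Fin dB, ∑ a : Fin dA, ∑ a₃ : Fin dA,
        ∑ a₂ : Fin dA, ∑ a₄ : Fin dA,
        (P x a a₂ * P x a₃ a₄) * (X (a₂,bb) (a,bb') * X (a₄,bb') (a₃,bb)))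
      = ∑ bb : Fin dB, ∑ bb' : Fin dB, ∑ a : Fin dA, ∑ a₃ : Fin dA, ∑ a₂ : Fin dA, ∑ a₄ : Fin dA,
        (∑ x : Fin (dA^2), P x a a₂ * P x a₃ a₄) * (X (a₂,bb) (a,bb') * X (a₄,bb') (a₃,bb)) := by
    rw [Finset.sum_comm]
    refine Finset.sum_congr rfl fun bb _ => ?_
    rw [Finset.sum_comm]
    refine Finset.sum_congr rfl fun bb' _ => ?_
    rw [Finset.sum_comm]
    refine Finset.sum_congr rfl fun a _ => ?_
    rw [Finset.sum_comm]
    refine Finset.sum_congr rfl fun a₃ _ => ?_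
    rw [Finset.sum_comm]
    refine Finset.sum_congr rfl fun a₂ _ => ?_
    rw [Finset.sum_comm]
    refine Finset.sum_congr rfl fun a₄ _ => ?_
    rw [← Finset.sum_mul]
  rw [hswap]
  -- collapse the deltas
  have step : ∀ (bb bb' : Fin dB) (a a₃ : Fin dA),
      (∑ a₂ : Fin dA, ∑ a₄ : Fin dA,
        (∑ x : Fin (dA^2), P x a a₂ * P x a₃ a₄) * (X (a₂,bb) (a,bb') * X (a₄,bb') (a₃,bb)))
      = r * (X (a₃,bb) (a,bb') * X (a,bb') (a₃,bb))
        + l * (X (a,bb) (a,bb') * X (a₃,bb') (a₃,bb)) := by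
    intro bb bb' a a₃
    simp only [key]
    simp [add_mul, ite_mul, mul_ite, one_mul, zero_mul, mul_one, mul_zero, ite_and,
      Finset.sum_add_distrib, Finset.sum_ite_eq, Finset.sum_ite_eq', mul_assoc]
  rw [Finset.sum_congr rfl (fun bb _ => Finset.sum_congr rfl (fun bb' _ =>
    Finset.sum_congr rfl (fun a _ => Finset.sum_congr rfl (fun a₃ _ => step bb bb' a a₃))))]
  -- identify the two traces
  have hXX : (X * X).trace = ∑ bb : Fin dB, ∑ bb' : Fin dB, ∑ a : Fin dA, ∑ a₃ : Fin dA,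
      X (a₃,bb) (a,bb') * X (a,bb') (a₃,bb) := by
    have h0 : (X * X).trace = ∑ a₃ : Fin dA, ∑ bb : Fin dB, ∑ a : Fin dA, ∑ bb' : Fin dB,
        X (a₃,bb) (a,bb') * X (a,bb') (a₃,bb) := by
      simp [Matrix.trace, Matrix.diag, Matrix.mul_apply, Fintype.sum_prod_type]
    rw [h0, Finset.sum_comm]
    refine Finset.sum_congr rfl fun bb _ => ?_
    rw [Finset.sum_comm]
    rw [Finset.sum_congr rfl (fun a _ => Finset.sum_comm (s := (Finset.univ : Finset (Fin dA)))
      (t := (Finset.univ : Finset (Fin dB)))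
      (f := fun a₃ bb' => X (a₃,bb) (a,bb') * X (a,bb') (a₃,bb)))]
    rw [Finset.sum_comm]
  have hPt : (ptraceA dA dB X * ptraceA dA dB X).trace
      = ∑ bb : Fin dB, ∑ bb' : Fin dB, ∑ a : Fin dA, ∑ a₃ : Fin dA,
        X (a,bb) (a,bb') * X (a₃,bb') (a₃,bb) := by
    calc (ptraceA dA dB X * ptraceA dA dB X).trace
        = ∑ bb, ∑ bb', (∑ a : Fin dA, X (a,bb) (a,bb')) * (∑ a₃ : Fin dA, X (a₃,bb') (a₃,bb)) := by
          simp [Matrix.trace, Matrix.diag, Matrix.mul_apply, ptraceA]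
      _ = _ := by
          refine Finset.sum_congr rfl fun bb _ => Finset.sum_congr rfl fun bb' _ => ?_
          rw [Finset.sum_mul_sum]
  -- final assembly
  rw [hXX, hPt]
  simp only [Finset.mul_sum, Finset.sum_add_distrib]
  rw [add_comm]
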